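/- Let S be a nonempty finite set of clusterings of X into Fin k, each of which co-clusters at least one pair and separates at least one pair. Suppose Θ* ∈ S is Pareto optimal with respect to minimizing λ⁻ and maximizing λ⁺, i.e., there is no Θ ∈ S with λ⁻(Θ) ≤ λ⁻(Θ*) and λ⁺(Θ) ≥ λ⁺(Θ*) such that at least one of the two inequalities is strict. Then there exists Θ^P ∈ S that is Pareto optimal with respect to minimizing MD and maximizing MS (i.e., there is no Θ ∈ S with MD(Θ) ≤ MD(Θ^P) and MS(Θ) ≥ MS(Θ^P) such that at least one of the two inequalities is strict) and that satisfies MD(Θ*) ≤ MD(Θ^P) + ε and MS(Θ*) ≥ MS(Θ^P) − ε. (Proposition 2, part 2: a λ-Pareto optimal clustering is ε-Pareto optimal for the bi-criteria MD–MS objective.) -/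

import Mathlib

variable {α : Type*}

/-- A pair is an ordered pair of distinct points of `X`. -/
def IsPair (X : Finset α) (p : α × α) : Prop :=
  p.1 ∈ X ∧ p.2 ∈ X ∧ p.1 ≠ p.2

/-- The pairs of distinct points of `X` co-clustered by `Θ`. -/
def coPairs [DecidableEq α] {k : ℕ} (X : Finset α) (Θ : α → Fin k) : Finset (α × α) :=
  (X ×ˢ X).filter fun p => p.1 ≠ p.2 ∧ Θ p.1 = Θ p.2

/-- The pairs of distinct points of `X` separated by `Θ`. -/
def sepPairs [DecidableEq α] {k : ℕ} (X : Finset α) (Θ : α → Fin k) : Finset (α × α) :=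
  (X ×ˢ X).filter fun p => p.1 ≠ p.2 ∧ Θ p.1 ≠ Θ p.2

/-- Maximum diameter: maximum distance over co-clustered pairs. -/
noncomputable def MD [MetricSpace α] [DecidableEq α] {k : ℕ} (X : Finset α) (Θ : α → Fin k)
    (h : (coPairs X Θ).Nonempty) : ℝ :=
  (coPairs X Θ).sup' h fun p => dist p.1 p.2

/-- Minimum split: minimum distance over separated pairs. -/
noncomputable def MS [MetricSpace α] [DecidableEq α] {k : ℕ} (X : Finset α) (Θ : α → Fin k)
    (h : (sepPairs X Θ).Nonempty) : ℝ :=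
  (sepPairs X Θ).inf' h fun p => dist p.1 p.2

/-- `λ⁻(Θ)`: the distance class of a co-clustered pair of maximal distance
(equivalently, under monotonicity of `w`, the largest class of a co-clustered pair). -/
def lamMinus [DecidableEq α] {k : ℕ} (X : Finset α) (w : α × α → ℕ) (Θ : α → Fin k)
    (h : (coPairs X Θ).Nonempty) : ℕ :=
  (coPairs X Θ).sup' h w

/-- `λ⁺(Θ)`: the distance class of a separated pair of minimal distance
(equivalently, under monotonicity of `w`, the smallest class of a separated pair). -/
def lamPlus [DecidableEq α] {k : ℕ} (X : Finset α) (w : α × α → ℕ) (Θ : α → Fin k)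
    (h : (sepPairs X Θ).Nonempty) : ℕ :=
  (sepPairs X Θ).inf' h w


section Helpers

variable [MetricSpace α] [DecidableEq α] {k : ℕ}

private lemma isPair_of_mem_coPairs {X : Finset α} {Θ : α → Fin k} {p : α × α}
    (h : p ∈ coPairs X Θ) : IsPair X p := by
  simp only [coPairs, Finset.mem_filter, Finset.mem_product] at h
  exact ⟨h.1.1, h.1.2, h.2.1⟩

private lemma isPair_of_mem_sepPairs {X : Finset α} {Θ : α → Fin k} {p : α × α}
    (h : p ∈ sepPairs X Θ) : IsPair X p := by
  simp only [sepPairs, Finset.mem_filter, Finset.mem_product] at h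
  exact ⟨h.1.1, h.1.2, h.2.1⟩

private lemma exists_md (X : Finset α) (w : α × α → ℕ)
    (hmono : ∀ p q : α × α, IsPair X p → IsPair X q →
      dist p.1 p.2 ≤ dist q.1 q.2 → w p ≤ w q)
    (Θ : α → Fin k) (h : (coPairs X Θ).Nonempty) :
    ∃ p ∈ coPairs X Θ, MD X Θ h = dist p.1 p.2 ∧ lamMinus X w Θ h = w p := by
  obtain ⟨p, hp, hpd⟩ := Finset.exists_mem_eq_sup' h (fun p : α × α => dist p.1 p.2)
  have hmax : ∀ q ∈ coPairs X Θ, dist q.1 q.2 ≤ dist p.1 p.2 := by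
    intro q hq
    rw [← hpd]
    exact Finset.le_sup' (fun p : α × α => dist p.1 p.2) hq
  exact ⟨p, hp, hpd, le_antisymm (Finset.sup'_le _ _ fun q hq =>
    hmono q p (isPair_of_mem_coPairs hq) (isPair_of_mem_coPairs hp) (hmax q hq))
    (Finset.le_sup' w hp)⟩

private lemma exists_ms (X : Finset α) (w : α × α → ℕ)
    (hmono : ∀ p q : α × α, IsPair X p → IsPair X q →
      dist p.1 p.2 ≤ dist q.1 q.2 → w p ≤ w q)
    (Θ : α → Fin k) (h : (sepPairs X Θ).Nonempty) :
    ∃ p ∈ sepPairs X Θ, MS X Θ h = dist p.1 p.2 ∧ lamPlus X w Θ h = w p := by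
  obtain ⟨p, hp, hpd⟩ := Finset.exists_mem_eq_inf' h (fun p : α × α => dist p.1 p.2)
  have hmin : ∀ q ∈ sepPairs X Θ, dist p.1 p.2 ≤ dist q.1 q.2 := by
    intro q hq
    rw [← hpd]
    exact Finset.inf'_le (fun p : α × α => dist p.1 p.2) hq
  exact ⟨p, hp, hpd, le_antisymm (Finset.inf'_le w hp)
    (Finset.le_inf' _ _ fun q hq =>
      hmono p q (isPair_of_mem_sepPairs hp) (isPair_of_mem_sepPairs hq) (hmin q hq))⟩

end Helpers

/-- A clustering that is Pareto optimal w.r.t. minimizing `λ⁻` and maximizing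
`λ⁺` is `ε`-Pareto optimal for the bi-criteria MD–MS objective: some MD–MS
Pareto optimal clustering is within `ε` of it in both objectives. -/
theorem lam_pareto_implies_eps_pareto [MetricSpace α] [DecidableEq α]
    (X : Finset α) (hX : X.Nonempty) (ε : ℝ) (hε : 0 ≤ ε) (w : α × α → ℕ)
    (hmono : ∀ p q : α × α, IsPair X p → IsPair X q →
      dist p.1 p.2 ≤ dist q.1 q.2 → w p ≤ w q)
    (hspread : ∀ p q : α × α, IsPair X p → IsPair X q →
      w p = w q → dist q.1 q.2 ≤ dist p.1 p.2 + ε)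
    {k : ℕ} (hk : 1 ≤ k)
    (S : Set (α → Fin k)) (hfin : S.Finite) (hne : S.Nonempty)
    (hSco : ∀ Θ ∈ S, (coPairs X Θ).Nonempty)
    (hSsep : ∀ Θ ∈ S, (sepPairs X Θ).Nonempty)
    (Θstar : α → Fin k) (hstar : Θstar ∈ S)
    (hpareto : ¬ ∃ Θ, ∃ hΘ : Θ ∈ S,
      lamMinus X w Θ (hSco Θ hΘ) ≤ lamMinus X w Θstar (hSco Θstar hstar) ∧
      lamPlus X w Θstar (hSsep Θstar hstar) ≤ lamPlus X w Θ (hSsep Θ hΘ) ∧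
      (lamMinus X w Θ (hSco Θ hΘ) < lamMinus X w Θstar (hSco Θstar hstar) ∨
        lamPlus X w Θstar (hSsep Θstar hstar) < lamPlus X w Θ (hSsep Θ hΘ))) :
    ∃ ΘP, ∃ hP : ΘP ∈ S,
      (¬ ∃ Θ, ∃ hΘ : Θ ∈ S,
        MD X Θ (hSco Θ hΘ) ≤ MD X ΘP (hSco ΘP hP) ∧
        MS X ΘP (hSsep ΘP hP) ≤ MS X Θ (hSsep Θ hΘ) ∧
        (MD X Θ (hSco Θ hΘ) < MD X ΘP (hSco ΘP hP) ∨
          MS X ΘP (hSsep ΘP hP) < MS X Θ (hSsep Θ hΘ))) ∧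
      MD X Θstar (hSco Θstar hstar) ≤ MD X ΘP (hSco ΘP hP) + ε ∧
      MS X ΘP (hSsep ΘP hP) - ε ≤ MS X Θstar (hSsep Θstar hstar) := by
  classical
  -- helper: w p ≤ w q → dist p ≤ dist q + ε
  have key : ∀ p q : α × α, IsPair X p → IsPair X q → w p ≤ w q →
      dist p.1 p.2 ≤ dist q.1 q.2 + ε := by
    intro p q hp hq hle
    rcases eq_or_lt_of_le hle with heq | hlt
    · exact hspread q p hq hp heq.symm
    · by_contra hcon
      push_neg at hcon
      have : dist q.1 q.2 ≤ dist p.1 p.2 := by linarith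
      exact absurd (hmono q p hq hp this) (by omega)
  set T : Set (α → Fin k) := {Θ | ∃ h : Θ ∈ S,
    MD X Θ (hSco Θ h) ≤ MD X Θstar (hSco Θstar hstar) ∧
    MS X Θstar (hSsep Θstar hstar) ≤ MS X Θ (hSsep Θ h)} with hT
  have hTsub : T ⊆ S := fun Θ hΘ => hΘ.1
  have hTfin : T.Finite := hfin.subset hTsub
  have hTne : T.Nonempty := ⟨Θstar, hstar, le_refl _, le_refl _⟩
  set f : (α → Fin k) → ℝ ×ₗ ℝ := fun Θ =>
    if h : Θ ∈ S then toLex (MD X Θ (hSco Θ h), -(MS X Θ (hSsep Θ h)))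
    else toLex (0, 0) with hf
  obtain ⟨ΘP, hPT, hmin⟩ := Set.exists_min_image T f hTfin hTne
  obtain ⟨hP, hMDle, hMSge⟩ := hPT
  -- ε-bounds
  obtain ⟨ps, hps, hds, hws⟩ := exists_md X w hmono Θstar (hSco Θstar hstar)
  obtain ⟨pP, hpP, hdP, hwP⟩ := exists_md X w hmono ΘP (hSco ΘP hP)
  obtain ⟨qs, hqs, hds', hws'⟩ := exists_ms X w hmono Θstar (hSsep Θstar hstar)
  obtain ⟨qP, hqP, hdP', hwP'⟩ := exists_ms X w hmono ΘP (hSsep ΘP hP)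
  have hlm : lamMinus X w ΘP (hSco ΘP hP) ≤ lamMinus X w Θstar (hSco Θstar hstar) := by
    rw [hwP, hws]
    exact hmono pP ps (isPair_of_mem_coPairs hpP) (isPair_of_mem_coPairs hps)
      (by rw [← hdP, ← hds]; exact hMDle)
  have hlp : lamPlus X w Θstar (hSsep Θstar hstar) ≤ lamPlus X w ΘP (hSsep ΘP hP) := by
    rw [hwP', hws']
    exact hmono qs qP (isPair_of_mem_sepPairs hqs) (isPair_of_mem_sepPairs hqP)
      (by rw [← hdP', ← hds']; exact hMSge)
  have hnotstrict : ¬(lamMinus X w ΘP (hSco ΘP hP) < lamMinus X w Θstar (hSco Θstar hstar) ∨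
      lamPlus X w Θstar (hSsep Θstar hstar) < lamPlus X w ΘP (hSsep ΘP hP)) :=
    fun hs => hpareto ⟨ΘP, hP, hlm, hlp, hs⟩
  push_neg at hnotstrict
  have hlmeq : lamMinus X w ΘP (hSco ΘP hP) = lamMinus X w Θstar (hSco Θstar hstar) :=
    le_antisymm hlm hnotstrict.1
  have hlpeq : lamPlus X w Θstar (hSsep Θstar hstar) = lamPlus X w ΘP (hSsep ΘP hP) :=
    le_antisymm hlp hnotstrict.2
  have hweq1 : w pP = w ps := by rw [← hwP, ← hws, hlmeq]
  have hweq2 : w qs = w qP := by rw [← hwP', ← hws', hlpeq]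
  have hMDbound : MD X Θstar (hSco Θstar hstar) ≤ MD X ΘP (hSco ΘP hP) + ε := by
    rw [hds, hdP]
    exact key ps pP (isPair_of_mem_coPairs hps) (isPair_of_mem_coPairs hpP) hweq1.symm.le
  have hMSbound : MS X ΘP (hSsep ΘP hP) ≤ MS X Θstar (hSsep Θstar hstar) + ε := by
    rw [hdP', hds']
    exact key qP qs (isPair_of_mem_sepPairs hqP) (isPair_of_mem_sepPairs hqs) hweq2.ge
  refine ⟨ΘP, hP, ?_, hMDbound, by linarith⟩
  rintro ⟨Θ, hΘ, hMD, hMS, hstrict⟩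
  have hΘT : Θ ∈ T := ⟨hΘ, le_trans hMD hMDle, le_trans hMSge hMS⟩
  have hle := hmin Θ hΘT
  rw [hf] at hle
  simp only [dif_pos hP, dif_pos hΘ] at hle
  rw [Prod.Lex.le_iff] at hle
  rcases hle with h1 | ⟨h1, h2⟩
  · simp only [ofLex_toLex] at h1; linarith
  · simp only [ofLex_toLex] at h1 h2
    have : MS X Θ (hSsep Θ hΘ) ≤ MS X ΘP (hSsep ΘP hP) := by linarith
    rcases hstrict with hs | hs
    · linarith
    · linarith
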